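/- Let X and Y be real Banach spaces, p ≥ 1, and let L : X → Y be a continuous linear operator that does not lie in the operator-norm closure of the finite-rank continuous linear operators from X to Y; set δ := dist(L, {finite-rank operators from X to Y}) > 0. Let μ^0 be a nonzero finite Borel measure on X with ∫_X ‖x‖^p dμ^0(x) < ∞, and let F(x) := L x. Then for every cylindrical map G = D ∘ f ∘ E with f : ℝ^N → ℝ^{N'} continuously differentiable, ∫_X ‖DF(x) − DG(x)‖_{L(X,Y)}^p dμ^0(x) ≥ δ^p · μ^0(X). Consequently such cylindrical maps are not dense with respect to the operator-norm Sobolev norm ‖·‖_{W^{1,p}_{μ^0}}, even among maps F of class C^1 whose derivative grows at most linearly. -/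

import Mathlib

open MeasureTheory
open scoped Topology ENNReal NNReal

/-- A continuous linear operator has finite rank if its range is finite-dimensional. -/
def FiniteRankOp {X Y : Type*} [NormedAddCommGroup X] [NormedSpace ℝ X]
    [NormedAddCommGroup Y] [NormedSpace ℝ Y] (T : X →L[ℝ] Y) : Prop :=
  FiniteDimensional ℝ (LinearMap.range (T : X →ₗ[ℝ] Y))

/-- if `L` lies outside the operator-norm closure of the finite-rank operators,
`δ` is the distance from `L` to the finite-rank operators, `μ0` is a nonzero finite Borel
measure on `X` with finite `p`-th moment, and `F(x) := L x`, then for every cylindrical map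
`G = D ∘ f ∘ E` with `f` continuously differentiable,
`∫_X ‖DF(x) − DG(x)‖^p dμ0 ≥ δ^p · μ0(X)`. -/
theorem stmt_1 {X Y : Type*} [NormedAddCommGroup X] [NormedSpace ℝ X] [CompleteSpace X]
    [NormedAddCommGroup Y] [NormedSpace ℝ Y] [CompleteSpace Y]
    [MeasurableSpace X] [BorelSpace X]
    (p : ℝ) (hp : 1 ≤ p)
    (L : X →L[ℝ] Y)
    (hL : L ∉ closure {T : X →L[ℝ] Y | FiniteRankOp T})
    (δ : ℝ) (hδ : δ = Metric.infDist L {T : X →L[ℝ] Y | FiniteRankOp T})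
    (μ0 : Measure X) [IsFiniteMeasure μ0] (hμ0 : μ0 ≠ 0)
    (hmom : ∫⁻ x, (‖x‖₊ : ℝ≥0∞) ^ p ∂μ0 < ⊤) :
    ∀ (N N' : ℕ) (E : X →L[ℝ] (Fin N → ℝ)) (f : (Fin N → ℝ) → (Fin N' → ℝ))
      (D : (Fin N' → ℝ) →L[ℝ] Y), ContDiff ℝ 1 f →
      ENNReal.ofReal (δ ^ p) * μ0 Set.univ ≤
        ∫⁻ x,
          (‖fderiv ℝ (fun y : X => L y) x - fderiv ℝ (fun y : X => D (f (E y))) x‖₊ :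
            ℝ≥0∞) ^ p ∂μ0 := by
  intro N N' E f D hf
  have hp0 : (0:ℝ) ≤ p := le_trans zero_le_one hp
  have hδ0 : 0 ≤ δ := hδ ▸ Metric.infDist_nonneg
  calc ENNReal.ofReal (δ ^ p) * μ0 Set.univ
      = ∫⁻ _, ENNReal.ofReal (δ ^ p) ∂μ0 := by rw [lintegral_const]
    _ ≤ _ := by
        refine lintegral_mono fun x => ?_
        set T : X →L[ℝ] Y := D.comp ((fderiv ℝ f (E x)).comp E) with hT
        have hdf : HasFDerivAt f (fderiv ℝ f (E x)) (E x) :=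
          (hf.differentiable one_ne_zero (E x)).hasFDerivAt
        have hG : HasFDerivAt (fun y : X => D (f (E y))) T x :=
          D.hasFDerivAt.comp x (hdf.comp x E.hasFDerivAt)
        have hTfr : FiniteRankOp T := by
          have hD : FiniteDimensional ℝ (LinearMap.range (D : (Fin N' → ℝ) →ₗ[ℝ] Y)) :=
            LinearMap.finiteDimensional_range _
          exact Submodule.finiteDimensional_of_le
            (LinearMap.range_comp_le_range _ (D : (Fin N' → ℝ) →ₗ[ℝ] Y))
        have hle : δ ≤ ‖L - T‖ := by
          rw [hδ, ← dist_eq_norm]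
          exact Metric.infDist_le_dist_of_mem hTfr
        rw [hG.fderiv]
        have h1 : fderiv ℝ (fun y : X => L y) x = L := L.fderiv
        rw [h1]
        rw [← enorm_eq_nnnorm, ← ofReal_norm,
          ENNReal.ofReal_rpow_of_nonneg (norm_nonneg _) hp0]
        exact ENNReal.ofReal_le_ofReal (Real.rpow_le_rpow hδ0 hle hp0)
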